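/- (Proposition 1) Let h_b = Σ_{i=1}^{N_b} V_{i,b} e^{jφ_{i,b}} and h_e = Σ_{i=1}^{N_e} V_{i,e} e^{jφ_{i,e}}, where all amplitudes are positive with V_{1,k} ≥ V_{2,k} ≥ … ≥ V_{N_k,k} for k = b, e, and all phases are independent random variables each uniformly distributed on [0, 2π). Let γ_b = γ̄_b |h_b|² / (Σ_{i=1}^{N_b} V_{i,b}²) and γ_e = γ̄_e |h_e|² / (Σ_{i=1}^{N_e} V_{i,e}²) with γ̄_b, γ̄_e > 0, and define γ_b^min = γ̄_b ([V_{1,b} − Σ_{i=2}^{N_b} V_{i,b}]⁺)² / (Σ_{i=1}^{N_b} V_{i,b}²) and γ_e^max = γ̄_e (Σ_{i=1}^{N_e} V_{i,e})² / (Σ_{i=1}^{N_e} V_{i,e}²). If R_s > 0 and γ_b^min > 2^{R_s} γ_e^max + 2^{R_s} − 1, then P([log₂(1+γ_b) − log₂(1+γ_e)]⁺ < R_s) = 0, i.e., perfect secrecy is achieved. -/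

import Mathlib

open MeasureTheory ProbabilityTheory Complex Finset Real

/-- The uniform distribution on `[0, 2π)`. -/
noncomputable def uniformPhase : Measure ℝ :=
  (ENNReal.ofReal (2 * Real.pi))⁻¹ • (volume.restrict (Set.Ico 0 (2 * Real.pi)))

/-- **Proposition 1.** For ray-based legitimate and eavesdropper channels
`h_b = ∑ V_{i,b} e^{jφ_{i,b}}`, `h_e = ∑ V_{i,e} e^{jφ_{i,e}}` with positive ordered
amplitudes and jointly independent uniform phases, if `R_s > 0` and
`γ_b^min > 2^{R_s} γ_e^max + 2^{R_s} − 1`, then the outage probability of secrecy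
capacity is zero: `P([log₂(1+γ_b) − log₂(1+γ_e)]⁺ < R_s) = 0`. -/
theorem perfect_secrecy_nRay {Ω : Type*} [MeasurableSpace Ω] (μ : Measure Ω)
    [IsProbabilityMeasure μ] (nb ne : ℕ)
    (Vb : Fin (nb + 1) → ℝ) (Ve : Fin (ne + 1) → ℝ)
    (hVb : ∀ i, 0 < Vb i) (hVe : ∀ i, 0 < Ve i)
    (hVb_mono : ∀ i j : Fin (nb + 1), i ≤ j → Vb j ≤ Vb i)
    (hVe_mono : ∀ i j : Fin (ne + 1), i ≤ j → Ve j ≤ Ve i)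
    (φb : Fin (nb + 1) → Ω → ℝ) (φe : Fin (ne + 1) → Ω → ℝ)
    (hmeasb : ∀ i, Measurable (φb i)) (hmease : ∀ i, Measurable (φe i))
    (hindep : iIndepFun (Sum.elim φb φe) μ)
    (hunifb : ∀ i, Measure.map (φb i) μ = uniformPhase)
    (hunife : ∀ i, Measure.map (φe i) μ = uniformPhase)
    (γbar_b γbar_e : ℝ) (hγb : 0 < γbar_b) (hγe : 0 < γbar_e)
    (γb γe : Ω → ℝ)
    (hγb_def : ∀ ω, γb ω = γbar_b *
      ‖∑ i, (Vb i : ℂ) * Complex.exp ((φb i ω : ℂ) * Complex.I)‖ ^ 2 /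
      (∑ i, (Vb i) ^ 2))
    (hγe_def : ∀ ω, γe ω = γbar_e *
      ‖∑ i, (Ve i : ℂ) * Complex.exp ((φe i ω : ℂ) * Complex.I)‖ ^ 2 /
      (∑ i, (Ve i) ^ 2))
    (γb_min γe_max : ℝ)
    (hγb_min : γb_min = γbar_b * (max 0 (Vb 0 - ∑ i ∈ Finset.univ.erase 0, Vb i)) ^ 2 /
      (∑ i, (Vb i) ^ 2))
    (hγe_max : γe_max = γbar_e * (∑ i, Ve i) ^ 2 / (∑ i, (Ve i) ^ 2))
    (Rs : ℝ) (hRs : 0 < Rs)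
    (hsec : γb_min > 2 ^ Rs * γe_max + 2 ^ Rs - 1) :
    μ {ω | max 0 (Real.logb 2 (1 + γb ω) - Real.logb 2 (1 + γe ω)) < Rs} = 0 := by
  have habs : ∀ (r v : ℝ), ‖(v : ℂ) * Complex.exp ((r : ℂ) * Complex.I)‖
      = |v| := by
    intro r v
    simp [norm_mul, Complex.norm_exp_ofReal_mul_I]
  have hsumb_pos : (0:ℝ) < ∑ i, (Vb i) ^ 2 :=
    Finset.sum_pos (fun i _ => pow_pos (hVb i) 2) Finset.univ_nonempty
  have hsume_pos : (0:ℝ) < ∑ i, (Ve i) ^ 2 :=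
    Finset.sum_pos (fun i _ => pow_pos (hVe i) 2) Finset.univ_nonempty
  have key : ∀ ω, γb_min ≤ γb ω ∧ γe ω ≤ γe_max := by
    intro ω
    constructor
    · -- lower bound on γb
      rw [hγb_def, hγb_min]
      apply div_le_div_of_nonneg_right _ hsumb_pos.le
      apply mul_le_mul_of_nonneg_left _ hγb.le
      apply pow_le_pow_left₀ (le_max_left _ _)
      apply max_le (norm_nonneg _)
      have h1 : (Vb 0 : ℂ) * Complex.exp ((φb 0 ω : ℂ) * Complex.I)
          + ∑ i ∈ Finset.univ.erase 0, (Vb i : ℂ) * Complex.exp ((φb i ω : ℂ) * Complex.I)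
          = ∑ i, (Vb i : ℂ) * Complex.exp ((φb i ω : ℂ) * Complex.I) :=
        Finset.add_sum_erase Finset.univ
          (fun i : Fin (nb+1) => (Vb i : ℂ) * Complex.exp ((φb i ω : ℂ) * Complex.I))
          (Finset.mem_univ 0)
      calc Vb 0 - ∑ i ∈ Finset.univ.erase 0, Vb i
          ≤ ‖(Vb 0 : ℂ) * Complex.exp ((φb 0 ω : ℂ) * Complex.I)‖
            - ‖∑ i ∈ Finset.univ.erase 0,
              (Vb i : ℂ) * Complex.exp ((φb i ω : ℂ) * Complex.I)‖ := by
            rw [habs, abs_of_pos (hVb 0)]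
            gcongr
            calc ‖∑ i ∈ Finset.univ.erase 0,
                (Vb i : ℂ) * Complex.exp ((φb i ω : ℂ) * Complex.I)‖
                ≤ ∑ i ∈ Finset.univ.erase 0,
                  ‖(Vb i : ℂ) * Complex.exp ((φb i ω : ℂ) * Complex.I)‖ := by
                  exact norm_sum_le _ _
              _ = ∑ i ∈ Finset.univ.erase 0, Vb i := by
                  refine Finset.sum_congr rfl fun i _ => ?_
                  rw [habs, abs_of_pos (hVb i)]
        _ ≤ ‖∑ i, (Vb i : ℂ) * Complex.exp ((φb i ω : ℂ) * Complex.I)‖ := by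
            rw [← h1]
            have := norm_sub_norm_le
              ((Vb 0 : ℂ) * Complex.exp ((φb 0 ω : ℂ) * Complex.I))
              (-(∑ i ∈ Finset.univ.erase 0, (Vb i : ℂ) * Complex.exp ((φb i ω : ℂ) * Complex.I)))
            simp only [sub_neg_eq_add, norm_neg] at this
            exact this
    · -- upper bound on γe
      rw [hγe_def, hγe_max]
      apply div_le_div_of_nonneg_right _ hsume_pos.le
      apply mul_le_mul_of_nonneg_left _ hγe.le
      apply pow_le_pow_left₀ (norm_nonneg _)
      calc ‖∑ i, (Ve i : ℂ) * Complex.exp ((φe i ω : ℂ) * Complex.I)‖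
          ≤ ∑ i, ‖(Ve i : ℂ) * Complex.exp ((φe i ω : ℂ) * Complex.I)‖ :=
            norm_sum_le _ _
        _ = ∑ i, Ve i := by
            refine Finset.sum_congr rfl fun i _ => ?_
            rw [habs, abs_of_pos (hVe i)]
  have hempty : {ω | max 0 (Real.logb 2 (1 + γb ω) - Real.logb 2 (1 + γe ω)) < Rs} = ∅ := by
    ext ω
    simp only [Set.mem_setOf_eq, Set.mem_empty_iff_false, iff_false, not_lt]
    obtain ⟨hb, he⟩ := key ω
    have hγenn : 0 ≤ γe ω := by
      rw [hγe_def]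
      positivity
    have h1e : (0:ℝ) < 1 + γe ω := by linarith
    have hlt : 2 ^ Rs * (1 + γe ω) < 1 + γb ω := by
      have h2 : (0:ℝ) < 2 ^ Rs := Real.rpow_pos_of_pos (by norm_num) Rs
      nlinarith [mul_le_mul_of_nonneg_left he h2.le]
    have hlog : Rs + Real.logb 2 (1 + γe ω) < Real.logb 2 (1 + γb ω) := by
      have := Real.logb_lt_logb (b := 2) one_lt_two (by positivity) hlt
      rwa [Real.logb_mul (by positivity) (by positivity),
        Real.logb_rpow (by norm_num : (0:ℝ) < 2) (by norm_num : (2:ℝ) ≠ 1)] at this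
    have : Rs ≤ Real.logb 2 (1 + γb ω) - Real.logb 2 (1 + γe ω) := by linarith
    exact this.trans (le_max_right _ _)
  rw [hempty, measure_empty]
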